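/- With notation as in the construction: for any integers k, ℓ ≥ 1 and any standard rectangle R = I × J, there exists a nonempty rectangle E × F ⊆ I_{(ℓ)} × J_{(k)} that is disjoint from every standard rectangle R' with p_{R'} ≠ p_R. In particular, every point z ∈ E × F satisfies dist_H(q, z)² ≥ 2^{-2m-1} for all q ∈ P with q ≠ p_R. -/
import Mathlib


open MeasureTheory
open scoped ENNReal

/-- A dyadic interval `[k·2^n, (k+1)·2^n)`. -/
def IsDyadicInterval (I : Set ℝ) : Prop :=
  ∃ k n : ℤ, I = Set.Ico ((k : ℝ) * 2 ^ n) (((k : ℝ) + 1) * 2 ^ n)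

/-- An axis-parallel dyadic rectangle in the plane. -/
def IsDyadicRect (R : Set (ℝ × ℝ)) : Prop :=
  ∃ I J : Set ℝ, IsDyadicInterval I ∧ IsDyadicInterval J ∧ R = I ×ˢ J

/-- `dist_H(p,q)² = inf { |R| : R dyadic rectangle containing p and q }`. -/
noncomputable def distH2 (p q : ℝ × ℝ) : ℝ≥0∞ :=
  sInf {v | ∃ R : Set (ℝ × ℝ), IsDyadicRect R ∧ p ∈ R ∧ q ∈ R ∧ v = volume R}

def unitSq : Set (ℝ × ℝ) := Set.Ico (0 : ℝ) 1 ×ˢ Set.Ico (0 : ℝ) 1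

/-- A standard rectangle: a dyadic rectangle in `[0,1)²` of area `2^{-2m-2}`
containing a point of `P`. -/
def IsStdRect (m : ℕ) (P : Finset (ℝ × ℝ)) (T : Set (ℝ × ℝ)) : Prop :=
  IsDyadicRect T ∧ T ⊆ unitSq ∧
    volume T = (2 : ℝ≥0∞) ^ (-(2 * (m : ℤ)) - 2) ∧ ∃ q ∈ P, q ∈ T

section DyadicToolkit


noncomputable def dy (a n : ℤ) : Set ℝ := Set.Ico ((a : ℝ) * 2 ^ n) (((a : ℝ) + 1) * 2 ^ n)

lemma two_zpow_pos (n : ℤ) : (0:ℝ) < 2 ^ n := zpow_pos two_pos n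

lemma dy_nonempty (a n : ℤ) : (dy a n).Nonempty := by
  refine ⟨(a:ℝ) * 2^n, le_refl _, ?_⟩
  have := two_zpow_pos n
  nlinarith

lemma two_zpow_eq_ofReal (n : ℤ) : (2:ℝ≥0∞) ^ n = ENNReal.ofReal ((2:ℝ) ^ n) := by
  cases n with
  | ofNat k =>
      simp [zpow_natCast, ENNReal.ofReal_pow (by norm_num : (0:ℝ) ≤ 2)]
  | negSucc k =>
      rw [zpow_negSucc, zpow_negSucc, ENNReal.ofReal_inv_of_pos (by positivity),
        ENNReal.ofReal_pow (by norm_num : (0:ℝ) ≤ 2)]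
      norm_num

lemma vol_dy (a n : ℤ) : volume (dy a n) = (2:ℝ≥0∞) ^ n := by
  rw [dy, Real.volume_Ico, two_zpow_eq_ofReal]
  ring_nf

lemma two_zpow_strictMono : StrictMono (fun n : ℤ => (2:ℝ≥0∞) ^ n) := by
  intro a b h
  simp only [two_zpow_eq_ofReal]
  exact (ENNReal.ofReal_lt_ofReal_iff (two_zpow_pos b)).2 (zpow_lt_zpow_right₀ one_lt_two h)

lemma two_zpow_le_iff {a b : ℤ} : (2:ℝ≥0∞) ^ a ≤ 2 ^ b ↔ a ≤ b := two_zpow_strictMono.le_iff_le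

lemma two_zpow_inj {a b : ℤ} (h : (2:ℝ≥0∞) ^ a = 2 ^ b) : a = b :=
  two_zpow_strictMono.injective h

lemma two_zpow_mul (a b : ℤ) : (2:ℝ≥0∞) ^ a * 2 ^ b = 2 ^ (a + b) :=
  (ENNReal.zpow_add two_ne_zero ENNReal.ofNat_ne_top a b).symm




lemma mem_dy {x : ℝ} {a n : ℤ} : x ∈ dy a n ↔ (a:ℝ) * 2^n ≤ x ∧ x < ((a:ℝ)+1) * 2^n := Iff.rfl

lemma dy_subset_dy {a e b f : ℤ} (hef : e ≤ f) (hne : (dy a e ∩ dy b f).Nonempty) :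
    dy a e ⊆ dy b f := by
  obtain ⟨x, hx1, hx2⟩ := hne
  set d : ℕ := (f - e).toNat with hd
  have hfd : f = e + d := by
    have : ((f - e).toNat : ℤ) = f - e := Int.toNat_of_nonneg (by omega)
    omega
  have h2f : (2:ℝ)^f = ((2^d : ℤ) : ℝ) * 2^e := by
    rw [hfd, zpow_add₀ (by norm_num : (2:ℝ) ≠ 0)]
    push_cast
    rw [zpow_natCast]
    ring
  set c : ℤ := b * 2^d with hc
  have hb1 : ((b:ℝ)) * 2^f = (c:ℝ) * 2^e := by rw [h2f, hc]; push_cast; ring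
  have hb2 : ((b:ℝ)+1) * 2^f = ((c + 2^d : ℤ):ℝ) * 2^e := by rw [h2f, hc]; push_cast; ring
  have hx1' := hx1.1
  have hx1'' := hx1.2
  have hx2' := hx2.1
  have hx2'' := hx2.2
  rw [hb1] at hx2'
  rw [hb2] at hx2''
  have hpos := two_zpow_pos e
  -- c ≤ a
  have hca : c ≤ a := by
    have : (c:ℝ) * 2^e < ((a:ℝ)+1) * 2^e := lt_of_le_of_lt hx2' hx1''
    have : (c:ℝ) < (a:ℝ) + 1 := lt_of_mul_lt_mul_right this hpos.le
    exact_mod_cast Int.lt_add_one_iff.mp (by exact_mod_cast this)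
  have hac : a + 1 ≤ c + 2^d := by
    have : (a:ℝ) * 2^e < ((c + 2^d : ℤ):ℝ) * 2^e := lt_of_le_of_lt hx1' hx2''
    have : (a:ℝ) < ((c + 2^d : ℤ):ℝ) := lt_of_mul_lt_mul_right this hpos.le
    exact_mod_cast Int.add_one_le_iff.mpr (by exact_mod_cast this)
  intro y hy
  constructor
  · rw [hb1]
    calc (c:ℝ) * 2^e ≤ (a:ℝ) * 2^e := by
          apply mul_le_mul_of_nonneg_right _ hpos.le; exact_mod_cast hca
      _ ≤ y := hy.1
  · rw [hb2]
    calc y < ((a:ℝ)+1) * 2^e := hy.2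
      _ ≤ ((c + 2^d : ℤ):ℝ) * 2^e := by
          apply mul_le_mul_of_nonneg_right _ hpos.le
          exact_mod_cast hac

lemma dy_eq_of_inter {a b e : ℤ} (hne : (dy a e ∩ dy b e).Nonempty) : a = b := by
  obtain ⟨x, hx1, hx2⟩ := hne
  have hpos := two_zpow_pos e
  have h1 : (a:ℝ) < (b:ℝ) + 1 := by
    have := lt_of_le_of_lt hx1.1 hx2.2
    exact lt_of_mul_lt_mul_right this hpos.le
  have h2 : (b:ℝ) < (a:ℝ) + 1 := by
    have := lt_of_le_of_lt hx2.1 hx1.2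
    exact lt_of_mul_lt_mul_right this hpos.le
  have : a < b + 1 := by exact_mod_cast h1
  have : b < a + 1 := by exact_mod_cast h2
  omega

lemma dy_children (a e : ℤ) : dy a e = dy (2*a) (e-1) ∪ dy (2*a+1) (e-1) := by
  have h : (2:ℝ)^e = 2 * 2^(e-1) := by
    rw [show e = 1 + (e-1) by ring, zpow_add₀ (by norm_num : (2:ℝ) ≠ 0)]
    norm_num
  unfold dy
  have e1 : ((2*a : ℤ):ℝ) * 2^(e-1) = (a:ℝ) * 2^e := by rw [h]; push_cast; ring
  have e2 : (((2*a : ℤ):ℝ)+1) * 2^(e-1) = ((2*a+1 : ℤ):ℝ) * 2^(e-1) := by push_cast; ring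
  have e3 : (((2*a+1 : ℤ):ℝ)+1) * 2^(e-1) = ((a:ℝ)+1) * 2^e := by rw [h]; push_cast; ring
  rw [e1, e2, e3, Set.Ico_union_Ico_eq_Ico]
  · rw [h]; push_cast; nlinarith [two_zpow_pos (e-1)]
  · rw [h]; push_cast; nlinarith [two_zpow_pos (e-1)]

lemma mem_dy_floor (x : ℝ) (e : ℤ) : x ∈ dy ⌊x / 2^e⌋ e := by
  have hpos := two_zpow_pos e
  constructor
  · calc (⌊x / 2^e⌋ : ℝ) * 2^e ≤ (x / 2^e) * 2^e :=
        mul_le_mul_of_nonneg_right (Int.floor_le _) hpos.le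
      _ = x := by field_simp
  · calc x = (x / 2^e) * 2^e := by field_simp
      _ < ((⌊x / 2^e⌋:ℝ) + 1) * 2^e := by
          apply mul_lt_mul_of_pos_right (Int.lt_floor_add_one _) hpos



lemma dy_parent (a e : ℤ) : dy a e ⊆ dy (a.ediv 2) (e+1) := by
  have hch := dy_children (a.ediv 2) (e+1)
  rw [show e+1-1 = e by ring] at hch
  rw [hch]
  have h2 : 2 * a.ediv 2 + a.emod 2 = a := Int.mul_ediv_add_emod a 2
  have hr0 : 0 ≤ a.emod 2 := Int.emod_nonneg a (by norm_num)
  have hr1 : a.emod 2 < 2 := Int.emod_lt_of_pos a (by norm_num)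
  have : a = 2 * a.ediv 2 ∨ a = 2 * a.ediv 2 + 1 := by omega
  rcases this with h | h
  · nth_rewrite 1 [h]; exact Set.subset_union_left
  · nth_rewrite 1 [h]; exact Set.subset_union_right

lemma dy_ancestor (a e : ℤ) (d : ℕ) : ∃ c, dy a e ⊆ dy c (e + d) := by
  induction d with
  | zero => exact ⟨a, by norm_num⟩
  | succ n ih =>
      obtain ⟨c, hc⟩ := ih
      exact ⟨c.ediv 2, by
        have := dy_parent c (e + n)
        rw [show (e + (n:ℤ)) + 1 = e + ((n:ℕ)+1 : ℕ) by push_cast; ring] at this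
        exact hc.trans this⟩

lemma key1d (B : ℕ → Set ℝ) (n a : ℤ) (S : ℕ)
    (hsep : ∀ t : ℕ, 1 ≤ t → t ≤ S → ∀ x ∈ B t, ∀ y ∈ B t, x ≠ y →
      ∀ c : ℤ, x ∈ dy c (n - t + 1) → y ∈ dy c (n - t + 1) → False) :
    ∃ x ∈ dy a n, ∀ t : ℕ, 1 ≤ t → t ≤ S → ∀ c : ℤ, x ∈ dy c (n - t) →
      ∀ y ∈ B t, y ∉ dy c (n - t) := by
  have main : ∀ S' : ℕ, S' ≤ S → ∃ b : ℤ, dy b (n - S') ⊆ dy a n ∧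
      ∀ t : ℕ, 1 ≤ t → t ≤ S' → ∀ c : ℤ, dy b (n - S') ⊆ dy c (n - t) →
        ∀ y ∈ B t, y ∉ dy c (n - t) := by
    intro S'
    induction S' with
    | zero => exact fun _ => ⟨a, by norm_num, fun t ht1 ht2 => by omega⟩
    | succ S'' ih =>
        intro hle
        obtain ⟨b, hsub, hb⟩ := ih (by omega)
        have hchild : ∀ i : ℤ, dy (2*b+i) (n - S'' - 1) ⊆ dy b (n - S'') → True := fun _ _ => trivial
        have hL : dy (2*b) (n - S'' - 1) ⊆ dy b (n - S'') := by
          rw [dy_children b (n - S'')]; exact Set.subset_union_left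
        have hR : dy (2*b+1) (n - S'' - 1) ⊆ dy b (n - S'') := by
          rw [dy_children b (n - S'')]; exact Set.subset_union_right
        have hdisj : ∀ y, y ∈ dy (2*b) (n - S'' - 1) → y ∈ dy (2*b+1) (n - S'' - 1) → False := by
          intro y h1 h2
          have := dy_eq_of_inter ⟨y, h1, h2⟩
          omega
        -- choose a child avoiding B (S''+1)
        have : ∃ b' : ℤ, dy b' (n - S'' - 1) ⊆ dy b (n - S'') ∧
            ∀ y ∈ B (S''+1), y ∉ dy b' (n - S'' - 1) := by
          by_cases hc : ∃ y ∈ B (S''+1), y ∈ dy (2*b) (n - S'' - 1)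
          · refine ⟨2*b+1, hR, fun y hy hy2 => ?_⟩
            obtain ⟨x, hxB, hx⟩ := hc
            have hxy : x ≠ y := fun h => hdisj x hx (h ▸ hy2)
            exact hsep (S''+1) (by omega) (by omega) x hxB y hy hxy b
              (by rw [show n - (S''+1 : ℕ) + 1 = n - S'' by push_cast; ring]; exact hL hx)
              (by rw [show n - (S''+1 : ℕ) + 1 = n - S'' by push_cast; ring]; exact hR hy2)
          · push_neg at hc
            exact ⟨2*b, hL, hc⟩
        obtain ⟨b', hb'sub, hb'avoid⟩ := this
        refine ⟨b', ?_, ?_⟩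
        · rw [show n - ((S''+1 : ℕ) : ℤ) = n - S'' - 1 by push_cast; ring]
          exact (hb'sub.trans hsub)
        · intro t ht1 ht2 c hcsub y hyB
          rw [show n - ((S''+1 : ℕ) : ℤ) = n - (S'':ℤ) - 1 by push_cast; ring] at hcsub
          rcases Nat.lt_or_ge t (S''+1) with h | h
          · -- t ≤ S''
            obtain ⟨z, hz⟩ := dy_nonempty b' (n - (S'':ℤ) - 1)
            exact hb t ht1 (by omega) c
              (dy_subset_dy (by omega) ⟨z, hb'sub hz, hcsub hz⟩) y hyB
          · -- t = S'' + 1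
            have ht : t = S'' + 1 := by omega
            subst ht
            rw [show n - ((S''+1 : ℕ) : ℤ) = n - (S'':ℤ) - 1 by push_cast; ring] at hcsub
            intro hy
            rw [show n - ((S''+1 : ℕ) : ℤ) = n - (S'':ℤ) - 1 by push_cast; ring] at hy
            obtain ⟨z, hz⟩ := dy_nonempty b' (n - (S'':ℤ) - 1)
            have hcb : c = b' := dy_eq_of_inter (a := c) (b := b') ⟨z, hcsub hz, hz⟩
            subst hcb
            exact hb'avoid y hyB hy
  obtain ⟨b, hsub, hb⟩ := main S le_rfl
  obtain ⟨x, hx⟩ := dy_nonempty b (n - S)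
  refine ⟨x, hsub hx, fun t ht1 ht2 c hxc y hyB hy => ?_⟩
  exact hb t ht1 ht2 c (dy_subset_dy (by omega) ⟨x, hx, hxc⟩) y hyB hy


lemma vol_dy_prod (a n b m : ℤ) : volume (dy a n ×ˢ dy b m) = (2:ℝ≥0∞)^(n+m) := by
  rw [← two_zpow_mul, ← vol_dy a n, ← vol_dy b m, Measure.volume_eq_prod, Measure.prod_prod]

lemma Ico01_eq : Set.Ico (0:ℝ) 1 = dy 0 0 := by unfold dy; norm_num

lemma unitSq_eq : unitSq = dy 0 0 ×ˢ dy 0 0 := by rw [unitSq, Ico01_eq]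

lemma dy_isDyadic (a n : ℤ) : IsDyadicInterval (dy a n) := ⟨a, n, rfl⟩

lemma dy_scale_le_of_subset {a e b f : ℤ} (h : dy a e ⊆ dy b f) : e ≤ f :=
  two_zpow_le_iff.mp (by rw [← vol_dy a e, ← vol_dy b f]; exact measure_mono h)

end DyadicToolkit

/-- Lemma (pointFinder2): for `k, ℓ ≥ 1` and a standard rectangle `R = I × J` with
point `p`, there is a nonempty dyadic rectangle `E × F ⊆ I_{(ℓ)} × J_{(k)}` disjoint
from every standard rectangle whose point of `P` differs from `p`; in particular
every `z ∈ E × F` satisfies `dist_H(q,z)² ≥ 2^{-2m-1}` for all `q ∈ P`, `q ≠ p`. -/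
theorem stmt15 (m : ℕ) (P : Finset (ℝ × ℝ))
    (hPsub : (↑P : Set (ℝ × ℝ)) ⊆ unitSq)
    (hP1 : ∀ R : Set (ℝ × ℝ), IsDyadicRect R → R ⊆ unitSq →
      volume R = (2 : ℝ≥0∞) ^ (-(2 * (m : ℤ)) - 1) → ∃! q, q ∈ P ∧ q ∈ R)
    (hP2 : ∀ p ∈ P, ∀ q ∈ P, p ≠ q → ∀ R : Set (ℝ × ℝ), IsDyadicRect R →
      p ∈ R → q ∈ R → (2 : ℝ≥0∞) ^ (-(2 * (m : ℤ))) ≤ volume R)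
    (I J : Set ℝ) (hI : IsDyadicInterval I) (hJ : IsDyadicInterval J)
    (hRstd : IsStdRect m P (I ×ˢ J))
    (p : ℝ × ℝ) (hpP : p ∈ P) (hpR : p ∈ I ×ˢ J)
    (k ℓ : ℕ) (hk : 1 ≤ k) (hℓ : 1 ≤ ℓ)
    -- `Iℓ = I_{(ℓ)}`
    (Iℓ : Set ℝ) (hIℓ : IsDyadicInterval Iℓ) (hIℓI : Iℓ ⊆ I)
    (hIℓvol : volume Iℓ = (2 : ℝ≥0∞) ^ (-(ℓ : ℤ)) * volume I)
    (hIℓp : p.1 ∉ Iℓ)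
    (hIℓpar : ∃ Ihat : Set ℝ, IsDyadicInterval Ihat ∧ Iℓ ⊆ Ihat ∧
      volume Ihat = 2 * volume Iℓ ∧ p.1 ∈ Ihat)
    -- `Jk = J_{(k)}`
    (Jk : Set ℝ) (hJk : IsDyadicInterval Jk) (hJkJ : Jk ⊆ J)
    (hJkvol : volume Jk = (2 : ℝ≥0∞) ^ (-(k : ℤ)) * volume J)
    (hJkp : p.2 ∉ Jk)
    (hJkpar : ∃ Jhat : Set ℝ, IsDyadicInterval Jhat ∧ Jk ⊆ Jhat ∧
      volume Jhat = 2 * volume Jk ∧ p.2 ∈ Jhat) :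
    ∃ E F : Set ℝ, IsDyadicInterval E ∧ IsDyadicInterval F ∧
      (E ×ˢ F).Nonempty ∧ E ×ˢ F ⊆ Iℓ ×ˢ Jk ∧
      (∀ R' : Set (ℝ × ℝ), IsStdRect m P R' → (∀ q ∈ P, q ∈ R' → q ≠ p) →
        Disjoint (E ×ˢ F) R') ∧
      (∀ z ∈ E ×ˢ F, ∀ q ∈ P, q ≠ p →
        (2 : ℝ≥0∞) ^ (-(2 * (m : ℤ)) - 1) ≤ distH2 q z) := by
  classical
  -- unpack all the dyadic intervals
  obtain ⟨Ihat, hIhd, hIhsub, hIhvol, hIhp⟩ := hIℓpar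
  obtain ⟨Jhat, hJhd, hJhsub, hJhvol, hJhp⟩ := hJkpar
  obtain ⟨aI, nI, hIe⟩ := hI
  have hIe' : I = dy aI nI := hIe
  subst hIe'
  obtain ⟨aJ, nJ, hJe⟩ := hJ
  have hJe' : J = dy aJ nJ := hJe
  subst hJe'
  obtain ⟨aL, nL, hLe⟩ := hIℓ
  have hLe' : Iℓ = dy aL nL := hLe
  subst hLe'
  obtain ⟨aK, nK, hKe⟩ := hJk
  have hKe' : Jk = dy aK nK := hKe
  subst hKe'
  obtain ⟨aH, nH, hHe⟩ := hIhd
  have hHe' : Ihat = dy aH nH := hHe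
  subst hHe'
  obtain ⟨aG, nG, hGe⟩ := hJhd
  have hGe' : Jhat = dy aG nG := hGe
  subst hGe'
  -- scale bookkeeping
  have hvolIJ := hRstd.2.2.1
  rw [vol_dy_prod] at hvolIJ
  have hnIJ : nI + nJ = -(2 * (m:ℤ)) - 2 := two_zpow_inj hvolIJ
  rw [vol_dy, vol_dy, two_zpow_mul] at hIℓvol hJkvol
  have hnL : nL = -(ℓ:ℤ) + nI := two_zpow_inj hIℓvol
  have hnK : nK = -(k:ℤ) + nJ := two_zpow_inj hJkvol
  rw [vol_dy, vol_dy] at hIhvol hJhvol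
  have hnH : nH = 1 + nL := two_zpow_inj (by rw [hIhvol, ← two_zpow_mul, zpow_one])
  have hnG : nG = 1 + nK := two_zpow_inj (by rw [hJhvol, ← two_zpow_mul, zpow_one])
  -- I, J inside the unit interval
  have hIJsub := hRstd.2.1
  rw [unitSq_eq] at hIJsub
  rcases Set.prod_subset_prod_iff.mp hIJsub with ⟨hIsub, hJsub⟩ | h | h
  rotate_left
  · exact absurd h (dy_nonempty _ _).ne_empty
  · exact absurd h (dy_nonempty _ _).ne_empty
  have hnI0 : nI ≤ 0 := dy_scale_le_of_subset hIsub
  have hnJ0 : nJ ≤ 0 := dy_scale_le_of_subset hJsub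
  -- integer form of the separation hypothesis
  have hP2ℤ : ∀ q ∈ P, ∀ q' ∈ P, q ≠ q' → ∀ c e c₂ e₂ : ℤ, q.1 ∈ dy c e → q.2 ∈ dy c₂ e₂ →
      q'.1 ∈ dy c e → q'.2 ∈ dy c₂ e₂ → -(2 * (m:ℤ)) ≤ e + e₂ := by
    intro q hq q' hq' hne c e c₂ e₂ h1 h2 h3 h4
    have := hP2 q hq q' hq' hne (dy c e ×ˢ dy c₂ e₂)
      ⟨dy c e, dy c₂ e₂, dy_isDyadic c e, dy_isDyadic c₂ e₂, rfl⟩ ⟨h1, h2⟩ ⟨h3, h4⟩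
    rw [vol_dy_prod] at this
    exact two_zpow_le_iff.mp this
  -- the bad sets for the first coordinate
  set B₁ : ℕ → Set ℝ := fun t => {x : ℝ | ∃ q : ℝ × ℝ, q ∈ P ∧ q ≠ p ∧ q.1 = x ∧
    ∃ c : ℤ, dy aJ nJ ⊆ dy c (nJ + ℓ + t) ∧ q.2 ∈ dy c (nJ + ℓ + t)} with hB₁
  set S₁ : ℕ := (-nJ - ℓ).toNat with hS₁
  have hsep₁ : ∀ t : ℕ, 1 ≤ t → t ≤ S₁ → ∀ x ∈ B₁ t, ∀ y ∈ B₁ t, x ≠ y →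
      ∀ c : ℤ, x ∈ dy c (nL - t + 1) → y ∈ dy c (nL - t + 1) → False := by
    rintro t ht1 ht2 x ⟨qx, hqxP, hqxp, rfl, cx, hJx, hx2⟩
      y ⟨qy, hqyP, hqyp, rfl, cy, hJy, hy2⟩ hxy c hxc hyc
    obtain ⟨w, hw⟩ := dy_nonempty aJ nJ
    have hcc : cx = cy := dy_eq_of_inter ⟨w, hJx hw, hJy hw⟩
    have hqq : qx ≠ qy := fun h => hxy (by rw [h])
    have := hP2ℤ qx hqxP qy hqyP hqq c (nL - t + 1) cx (nJ + ℓ + t) hxc hx2 hyc (by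
      rw [hcc]; exact hy2)
    omega
  obtain ⟨xs, hxsL, hxavoid⟩ := key1d B₁ nL aL S₁ hsep₁
  -- the bad sets for the second coordinate
  set B₂ : ℕ → Set ℝ := fun t => {y : ℝ | ∃ q : ℝ × ℝ, q ∈ P ∧ q ≠ p ∧ q.2 = y ∧
    ∃ c : ℤ, dy aI nI ⊆ dy c (nI + k + t) ∧ q.1 ∈ dy c (nI + k + t)} with hB₂
  set S₂ : ℕ := (-nI - k).toNat with hS₂
  have hsep₂ : ∀ t : ℕ, 1 ≤ t → t ≤ S₂ → ∀ x ∈ B₂ t, ∀ y ∈ B₂ t, x ≠ y →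
      ∀ c : ℤ, x ∈ dy c (nK - t + 1) → y ∈ dy c (nK - t + 1) → False := by
    rintro t ht1 ht2 x ⟨qx, hqxP, hqxp, rfl, cx, hIx, hx2⟩
      y ⟨qy, hqyP, hqyp, rfl, cy, hIy, hy2⟩ hxy c hxc hyc
    obtain ⟨w, hw⟩ := dy_nonempty aI nI
    have hcc : cx = cy := dy_eq_of_inter ⟨w, hIx hw, hIy hw⟩
    have hqq : qx ≠ qy := fun h => hxy (by rw [h])
    have := hP2ℤ qx hqxP qy hqyP hqq cx (nI + k + t) c (nK - t + 1) hx2 hxc (by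
      rw [hcc]; exact hy2) hyc
    omega
  obtain ⟨ys, hysK, hyavoid⟩ := key1d B₂ nK aK S₂ hsep₂
  -- define E, F
  set eE : ℤ := min nL (-(2 * (m:ℤ)) - 2) with heE
  set eF : ℤ := min nK (-(2 * (m:ℤ)) - 2) with heF
  have heE1 : eE ≤ nL := min_le_left _ _
  have heE2 : eE ≤ -(2 * (m:ℤ)) - 2 := min_le_right _ _
  have heF1 : eF ≤ nK := min_le_left _ _
  have heF2 : eF ≤ -(2 * (m:ℤ)) - 2 := min_le_right _ _
  set E : Set ℝ := dy ⌊xs / 2 ^ eE⌋ eE with hEdef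
  set F : Set ℝ := dy ⌊ys / 2 ^ eF⌋ eF with hFdef
  have hxsE : xs ∈ E := mem_dy_floor xs eE
  have hysF : ys ∈ F := mem_dy_floor ys eF
  have hEL : E ⊆ dy aL nL := dy_subset_dy heE1 ⟨xs, hxsE, hxsL⟩
  have hFK : F ⊆ dy aK nK := dy_subset_dy heF1 ⟨ys, hysF, hysK⟩
  -- main disjointness property
  have hdisj : ∀ R' : Set (ℝ × ℝ), IsStdRect m P R' → (∀ q ∈ P, q ∈ R' → q ≠ p) →
      Disjoint (E ×ˢ F) R' := by
    intro R' hR'std hfree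
    obtain ⟨⟨I', J', hI'd, hJ'd, rfl⟩, hR'sub, hR'vol, q', hq'P, hq'R⟩ := hR'std
    obtain ⟨c1, e1, h1e⟩ := hI'd
    have h1e' : I' = dy c1 e1 := h1e
    subst h1e'
    obtain ⟨c2, e2, h2e⟩ := hJ'd
    have h2e' : J' = dy c2 e2 := h2e
    subst h2e'
    rw [vol_dy_prod] at hR'vol
    have he12 : e1 + e2 = -(2 * (m:ℤ)) - 2 := two_zpow_inj hR'vol
    rw [unitSq_eq] at hR'sub
    rcases Set.prod_subset_prod_iff.mp hR'sub with ⟨h1sub, h2sub⟩ | h | h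
    rotate_left
    · exact absurd h (dy_nonempty _ _).ne_empty
    · exact absurd h (dy_nonempty _ _).ne_empty
    have he10 : e1 ≤ 0 := dy_scale_le_of_subset h1sub
    have he20 : e2 ≤ 0 := dy_scale_le_of_subset h2sub
    have hpn : p ∉ dy c1 e1 ×ˢ dy c2 e2 := fun h => (hfree p hpP h) rfl
    have hq'p : q' ≠ p := hfree q' hq'P hq'R
    rw [Set.disjoint_left]
    rintro w hwEF hwR'
    have hxs1 : xs ∈ dy c1 e1 := dy_subset_dy (by omega) ⟨w.1, hwEF.1, hwR'.1⟩ hxsE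
    have hys2 : ys ∈ dy c2 e2 := dy_subset_dy (by omega) ⟨w.2, hwEF.2, hwR'.2⟩ hysF
    rcases le_or_gt e1 nL with h1 | h1 <;> rcases le_or_gt e2 nK with h2 | h2
    · -- both small: impossible by area
      omega
    · -- tall rectangle
      have hI'L : dy c1 e1 ⊆ dy aL nL := dy_subset_dy h1 ⟨xs, hxs1, hxsL⟩
      have hJe2 : dy aJ nJ ⊆ dy c2 e2 :=
        dy_subset_dy (by omega) ⟨ys, hJkJ hysK, hys2⟩
      have hp2' : p.2 ∈ dy c2 e2 := hJe2 hpR.2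
      rcases eq_or_lt_of_le h1 with h1eq | h1lt
      · -- e1 = nL : I' = Iℓ, contradiction with hP2 via Ihat
        have hxs1' := hxs1
        rw [h1eq] at hxs1'
        have hc1 : c1 = aL := dy_eq_of_inter ⟨xs, hxs1', hxsL⟩
        have hq'1' : q'.1 ∈ dy aL nL := by
          have := hq'R.1; rw [hc1, h1eq] at this; exact this
        have hq'H : q'.1 ∈ dy aH nH := hIhsub hq'1'
        have := hP2ℤ p hpP q' hq'P (Ne.symm hq'p) aH nH c2 e2 hIhp hp2' hq'H hq'R.2
        omega
      · -- e1 < nL : a genuine strip, use the avoidance point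
        have hcast : nL - (((nL - e1).toNat : ℕ) : ℤ) = e1 := by omega
        refine hxavoid (nL - e1).toNat (by omega) (by omega) c1
          (by rw [hcast]; exact hxs1) q'.1 ?_ (by rw [hcast]; exact hq'R.1)
        refine ⟨q', hq'P, hq'p, rfl, c2, ?_, ?_⟩
        · rw [show nJ + ℓ + (((nL - e1).toNat : ℕ) : ℤ) = e2 by omega]; exact hJe2
        · rw [show nJ + ℓ + (((nL - e1).toNat : ℕ) : ℤ) = e2 by omega]; exact hq'R.2
    · -- wide rectangle
      have hJ'K : dy c2 e2 ⊆ dy aK nK := dy_subset_dy h2 ⟨ys, hys2, hysK⟩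
      have hIe1 : dy aI nI ⊆ dy c1 e1 :=
        dy_subset_dy (by omega) ⟨xs, hIℓI hxsL, hxs1⟩
      have hp1' : p.1 ∈ dy c1 e1 := hIe1 hpR.1
      rcases eq_or_lt_of_le h2 with h2eq | h2lt
      · have hys2' := hys2
        rw [h2eq] at hys2'
        have hc2 : c2 = aK := dy_eq_of_inter ⟨ys, hys2', hysK⟩
        have hq'2' : q'.2 ∈ dy aK nK := by
          have := hq'R.2; rw [hc2, h2eq] at this; exact this
        have hq'G : q'.2 ∈ dy aG nG := hJhsub hq'2'
        have := hP2ℤ p hpP q' hq'P (Ne.symm hq'p) c1 e1 aG nG hp1' hJhp hq'R.1 hq'G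
        omega
      · have hcast : nK - (((nK - e2).toNat : ℕ) : ℤ) = e2 := by omega
        refine hyavoid (nK - e2).toNat (by omega) (by omega) c2
          (by rw [hcast]; exact hys2) q'.2 ?_ (by rw [hcast]; exact hq'R.2)
        refine ⟨q', hq'P, hq'p, rfl, c1, ?_, ?_⟩
        · rw [show nI + k + (((nK - e2).toNat : ℕ) : ℤ) = e1 by omega]; exact hIe1
        · rw [show nI + k + (((nK - e2).toNat : ℕ) : ℤ) = e1 by omega]; exact hq'R.1
    · -- both large: p ∈ R', contradiction
      have hH1 : dy aH nH ⊆ dy c1 e1 := dy_subset_dy (by omega) ⟨xs, hIhsub hxsL, hxs1⟩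
      have hG2 : dy aG nG ⊆ dy c2 e2 := dy_subset_dy (by omega) ⟨ys, hJhsub hysK, hys2⟩
      exact hpn ⟨hH1 hIhp, hG2 hJhp⟩
  refine ⟨E, F, dy_isDyadic _ _, dy_isDyadic _ _,
    (dy_nonempty _ _).prod (dy_nonempty _ _), Set.prod_mono hEL hFK, hdisj, ?_⟩
  -- the distance estimate
  intro z hzEF q hqP hqp
  apply le_sInf
  rintro v ⟨T, ⟨IT, JT, hITd, hJTd, rfl⟩, hqT, hzT, rfl⟩
  obtain ⟨c1, e1, h1e⟩ := hITd
  have h1e' : IT = dy c1 e1 := h1e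
  subst h1e'
  obtain ⟨c2, e2, h2e⟩ := hJTd
  have h2e' : JT = dy c2 e2 := h2e
  subst h2e'
  rw [vol_dy_prod, two_zpow_le_iff]
  by_contra hlt
  push_neg at hlt
  have hsum : e1 + e2 ≤ -(2 * (m:ℤ)) - 2 := by omega
  -- coordinates of q and z lie in [0,1)
  have hq01 : q.1 ∈ dy 0 0 ∧ q.2 ∈ dy 0 0 := by
    have := hPsub (Finset.mem_coe.mpr hqP)
    rw [unitSq_eq] at this
    exact ⟨this.1, this.2⟩
  have hz1 : z.1 ∈ dy 0 0 := hIsub (hIℓI (hEL hzEF.1))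
  have hz2 : z.2 ∈ dy 0 0 := hJsub (hJkJ (hFK hzEF.2))
  -- normalize the rectangle so that both sides have scale ≤ 0
  have hnorm : ∀ (c e : ℤ) (u v : ℝ), u ∈ dy c e → v ∈ dy c e → u ∈ dy 0 0 → v ∈ dy 0 0 →
      ∃ c' e', e' ≤ 0 ∧ (e' = e ∨ 0 < e) ∧ u ∈ dy c' e' ∧ v ∈ dy c' e' := by
    intro c e u v hu hv hu0 hv0
    rcases le_or_gt e 0 with h | h
    · exact ⟨c, e, h, Or.inl rfl, hu, hv⟩
    · exact ⟨0, 0, le_rfl, Or.inr h, hu0, hv0⟩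
  obtain ⟨c1', e1', he1'0, he1'c, hq1', hz1'⟩ := hnorm c1 e1 q.1 z.1 hqT.1 hzT.1 hq01.1 hz1
  obtain ⟨c2', e2', he2'0, he2'c, hq2', hz2'⟩ := hnorm c2 e2 q.2 z.2 hqT.2 hzT.2 hq01.2 hz2
  have hsum' : e1' + e2' ≤ -(2 * (m:ℤ)) - 2 := by omega
  -- grow the rectangle to a standard rectangle
  have hex : ∃ fI fJ : ℤ, e1' ≤ fI ∧ fI ≤ 0 ∧ e2' ≤ fJ ∧ fJ ≤ 0 ∧
      fI + fJ = -(2 * (m:ℤ)) - 2 := by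
    refine ⟨max e1' (-(2 * (m:ℤ)) - 2), (-(2 * (m:ℤ)) - 2) - max e1' (-(2 * (m:ℤ)) - 2),
      le_max_left _ _, max_le he1'0 (by omega), ?_, ?_, by ring⟩
    · rcases max_choice e1' (-(2 * (m:ℤ)) - 2) with h | h <;> rw [h] <;> omega
    · have := le_max_right e1' (-(2 * (m:ℤ)) - 2); omega
  obtain ⟨fI, fJ, hfI1, hfI0, hfJ1, hfJ0, hfsum⟩ := hex
  obtain ⟨cA, hcA⟩ := dy_ancestor c1' e1' (fI - e1').toNat
  rw [show e1' + (((fI - e1').toNat : ℕ) : ℤ) = fI by omega] at hcA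
  obtain ⟨cB, hcB⟩ := dy_ancestor c2' e2' (fJ - e2').toNat
  rw [show e2' + (((fJ - e2').toNat : ℕ) : ℤ) = fJ by omega] at hcB
  have hT'std : IsStdRect m P (dy cA fI ×ˢ dy cB fJ) := by
    refine ⟨⟨dy cA fI, dy cB fJ, dy_isDyadic _ _, dy_isDyadic _ _, rfl⟩, ?_, ?_,
      q, hqP, hcA hq1', hcB hq2'⟩
    · rw [unitSq_eq]
      exact Set.prod_mono (dy_subset_dy hfI0 ⟨q.1, hcA hq1', hq01.1⟩)
        (dy_subset_dy hfJ0 ⟨q.2, hcB hq2', hq01.2⟩)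
    · rw [vol_dy_prod, hfsum]
  by_cases hpT' : p ∈ dy cA fI ×ˢ dy cB fJ
  · have := hP2ℤ p hpP q hqP (Ne.symm hqp) cA fI cB fJ hpT'.1 hpT'.2 (hcA hq1') (hcB hq2')
    omega
  · have hd := hdisj (dy cA fI ×ˢ dy cB fJ) hT'std
      (fun q'' _ hm hq''p => hpT' (hq''p ▸ hm))
    exact Set.disjoint_left.mp hd hzEF ⟨hcA hz1', hcB hz2'⟩
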